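/- The function f(M) = √(q(M)/p(M)) is continuously differentiable on (0,1) and satisfies f′(M) ≥ (a/(2M)) · f(M) for all M ∈ (0,1). -/

import Mathlib

open Real Set MeasureTheory

/-- `q(M) = (p(M)/M) ∫₀^M s^a / ((1-s)^b p(s)²) ds`. -/
noncomputable def qfun (p : ℝ → ℝ) (a b : ℝ) (M : ℝ) : ℝ :=
  p M / M * ∫ s in (0:ℝ)..M, s ^ a / ((1 - s) ^ b * p s ^ 2)

/-- The function `f(M) = √(q(M)/p(M))` is continuously differentiable on `(0,1)`
and satisfies `f′(M) ≥ (a/(2M)) f(M)` there. -/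
theorem f_deriv_lower_bound (a b : ℝ) (ha : 1 ≤ a) (hb : 1 ≤ b)
    (p : ℝ → ℝ) (hpc : ContinuousOn p (Icc 0 1))
    (hpa : AntitoneOn p (Icc 0 1)) (hp1 : p 1 = 0)
    (hppos : ∀ M ∈ Ico (0:ℝ) 1, 0 < p M) :
    ContDiffOn ℝ 1 (fun M => Real.sqrt (qfun p a b M / p M)) (Ioo (0:ℝ) 1) ∧
    ∀ M ∈ Ioo (0:ℝ) 1,
      a / (2 * M) * Real.sqrt (qfun p a b M / p M) ≤
        deriv (fun M => Real.sqrt (qfun p a b M / p M)) M := by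
  set g : ℝ → ℝ := fun s => s ^ a / ((1 - s) ^ b * p s ^ 2) with hgdef
  set I : ℝ → ℝ := fun M => ∫ s in (0:ℝ)..M, g s with hIdef
  set f : ℝ → ℝ := fun M => Real.sqrt (qfun p a b M / p M) with hfdef
  -- continuity of g on [0,1)
  have hgc : ContinuousOn g (Ico 0 1) := by
    apply ContinuousOn.div
    · exact (Real.continuous_rpow_const (by linarith)).continuousOn
    · apply ContinuousOn.mul
      · intro s hs
        exact ((Real.continuousAt_rpow_const (1 - s) b
            (Or.inl (ne_of_gt (by linarith [hs.2])))).comp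
          ((continuous_const.sub continuous_id).continuousAt)).continuousWithinAt
      · exact (hpc.mono Ico_subset_Icc_self).pow 2
    · intro s hs
      have h1 : (0:ℝ) < (1 - s) ^ b := Real.rpow_pos_of_pos (by linarith [hs.2]) b
      have h2 : 0 < p s := hppos s hs
      exact ne_of_gt (mul_pos h1 (pow_pos h2 2))
  -- FTC : I' = g on (0,1)
  have hIder : ∀ M ∈ Ioo (0:ℝ) 1, HasDerivAt I (g M) M := by
    intro M hM
    obtain ⟨hM0, hM1⟩ := hM
    have hIccsub : Icc (0:ℝ) M ⊆ Ico 0 1 := fun s hs => ⟨hs.1, lt_of_le_of_lt hs.2 hM1⟩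
    have hint : IntervalIntegrable g volume 0 M :=
      (hgc.mono hIccsub).intervalIntegrable_of_Icc hM0.le
    have hmeas := (hgc.mono Ioo_subset_Ico_self).stronglyMeasurableAtFilter (μ := volume)
      isOpen_Ioo M ⟨hM0, hM1⟩
    have hgMc : ContinuousAt g M :=
      (hgc.mono Ioo_subset_Ico_self).continuousAt (isOpen_Ioo.mem_nhds ⟨hM0, hM1⟩)
    exact intervalIntegral.integral_hasDerivAt_right hint hmeas hgMc
  -- positivity of I on (0,1)
  have hIpos : ∀ M ∈ Ioo (0:ℝ) 1, 0 < I M := by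
    intro M hM
    obtain ⟨hM0, hM1⟩ := hM
    have hIccsub : Icc (0:ℝ) M ⊆ Ico 0 1 := fun s hs => ⟨hs.1, lt_of_le_of_lt hs.2 hM1⟩
    have hint : IntervalIntegrable g volume 0 M :=
      (hgc.mono hIccsub).intervalIntegrable_of_Icc hM0.le
    refine intervalIntegral.intervalIntegral_pos_of_pos_on hint ?_ hM0
    intro s hs
    have h1 : (0:ℝ) < (1 - s) ^ b := Real.rpow_pos_of_pos (by linarith [hs.2]) b
    have h2 : 0 < p s := hppos s ⟨hs.1.le, hs.2.trans hM1⟩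
    have h3 : 0 < s ^ a := Real.rpow_pos_of_pos hs.1 a
    exact div_pos h3 (mul_pos h1 (pow_pos h2 2))
  -- the key integral inequality
  have hkey : ∀ M ∈ Ioo (0:ℝ) 1, (a + 1) * I M ≤ M * g M := by
    intro M hM
    obtain ⟨hM0, hM1⟩ := hM
    have hpM : 0 < p M := hppos M ⟨hM0.le, hM1⟩
    have hIccsub : Icc (0:ℝ) M ⊆ Ico 0 1 := fun s hs => ⟨hs.1, lt_of_le_of_lt hs.2 hM1⟩
    have hint : IntervalIntegrable g volume 0 M :=
      (hgc.mono hIccsub).intervalIntegrable_of_Icc hM0.le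
    set C : ℝ := (1 - M) ^ b * p M ^ 2 with hC
    have hCpos : 0 < C := mul_pos (Real.rpow_pos_of_pos (by linarith) b) (pow_pos hpM 2)
    have hbound : ∀ s ∈ Icc (0:ℝ) M, g s ≤ s ^ a / C := by
      intro s hs
      have hs1 : s < 1 := lt_of_le_of_lt hs.2 hM1
      have hps : 0 < p s := hppos s ⟨hs.1, hs1⟩
      have hD : C ≤ (1 - s) ^ b * p s ^ 2 := by
        apply mul_le_mul
        · exact Real.rpow_le_rpow (by linarith) (by linarith [hs.2]) (by linarith)
        · have hple := hpa ⟨hs.1, hs1.le⟩ ⟨hM0.le, hM1.le⟩ hs.2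
          exact pow_le_pow_left₀ hpM.le hple 2
        · positivity
        · exact Real.rpow_nonneg (by linarith) b
      exact div_le_div_of_nonneg_left (Real.rpow_nonneg hs.1 a) hCpos hD
    have hintR : IntervalIntegrable (fun s => s ^ a / C) volume 0 M :=
      ((Real.continuous_rpow_const (by linarith)).div_const C).intervalIntegrable 0 M
    have hmono : I M ≤ ∫ s in (0:ℝ)..M, s ^ a / C :=
      intervalIntegral.integral_mono_on hM0.le hint hintR hbound
    have ha1 : a + 1 ≠ 0 := by positivity
    have hintval : (∫ s in (0:ℝ)..M, s ^ a / C) = M ^ (a + 1) / (a + 1) / C := by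
      rw [intervalIntegral.integral_div, integral_rpow (Or.inl (by linarith))]
      rw [Real.zero_rpow ha1]
      ring
    have hMa : M ^ (a + 1) = M ^ a * M := Real.rpow_add_one hM0.ne' a
    have hgMval : g M = M ^ a / C := rfl
    rw [hintval, hMa] at hmono
    rw [hgMval]
    have h2 := mul_le_mul_of_nonneg_left hmono (by linarith : (0:ℝ) ≤ a + 1)
    calc (a + 1) * I M ≤ (a + 1) * (M ^ a * M / (a + 1) / C) := h2
      _ = M * (M ^ a / C) := by field_simp
  -- relating qfun to I
  have hq : ∀ x ∈ Ioo (0:ℝ) 1, qfun p a b x / p x = I x / x := by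
    intro x hx
    have hpx : 0 < p x := hppos x ⟨hx.1.le, hx.2⟩
    simp only [qfun, hIdef, hgdef]
    field_simp
  -- the derivative formula for f on (0,1)
  set D : ℝ → ℝ := fun M => (g M * M - I M * 1) / M ^ 2 / (2 * Real.sqrt (I M / M)) with hDdef
  have hDf : ∀ M ∈ Ioo (0:ℝ) 1, HasDerivAt f (D M) M := by
    intro M hM
    obtain ⟨hM0, hM1⟩ := hM
    have hupos : 0 < I M / M := div_pos (hIpos M ⟨hM0, hM1⟩) hM0
    have hu : HasDerivAt (fun x => I x / x) ((g M * M - I M * 1) / M ^ 2) M :=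
      (hIder M ⟨hM0, hM1⟩).div (hasDerivAt_id M) hM0.ne'
    have hsq : HasDerivAt (fun x => Real.sqrt (I x / x)) (D M) M := hu.sqrt hupos.ne'
    refine hsq.congr_of_eventuallyEq ?_
    filter_upwards [isOpen_Ioo.mem_nhds (⟨hM0, hM1⟩ : M ∈ Ioo (0:ℝ) 1)] with x hx
    simp only [hfdef]
    rw [hq x hx]
  constructor
  · -- continuous differentiability
    rw [show (1 : WithTop ℕ∞) = 0 + 1 by norm_num]
    rw [contDiffOn_succ_iff_deriv_of_isOpen isOpen_Ioo]
    refine ⟨fun x hx => (hDf x hx).differentiableAt.differentiableWithinAt, ?_, ?_⟩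
    · intro h; simp at h
    · rw [contDiffOn_zero]
      have hderiv_eq : ∀ x ∈ Ioo (0:ℝ) 1, deriv f x = D x := fun x hx => (hDf x hx).deriv
      refine ContinuousOn.congr ?_ hderiv_eq
      have hIc : ContinuousOn I (Ioo (0:ℝ) 1) :=
        fun x hx => ((hIder x hx).continuousAt).continuousWithinAt
      have hgc' : ContinuousOn g (Ioo (0:ℝ) 1) := hgc.mono Ioo_subset_Ico_self
      apply ContinuousOn.div
      · apply ContinuousOn.div
        · exact (hgc'.mul continuousOn_id).sub (hIc.mul continuousOn_const)
        · exact continuousOn_id.pow 2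
        · intro x hx; exact pow_ne_zero 2 (ne_of_gt hx.1)
      · refine ContinuousOn.mul continuousOn_const ?_
        exact Real.continuous_sqrt.comp_continuousOn
          (hIc.div continuousOn_id fun x hx => ne_of_gt hx.1)
      · intro x hx
        have hsx : 0 < Real.sqrt (I x / x) :=
          Real.sqrt_pos.mpr (div_pos (hIpos x hx) hx.1)
        positivity
  · -- the differential inequality
    intro M hM
    obtain ⟨hM0, hM1⟩ := hM
    rw [(hDf M ⟨hM0, hM1⟩).deriv]
    rw [hq M ⟨hM0, hM1⟩]
    have hspos : 0 < Real.sqrt (I M / M) :=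
      Real.sqrt_pos.mpr (div_pos (hIpos M ⟨hM0, hM1⟩) hM0)
    have hs2 : Real.sqrt (I M / M) ^ 2 = I M / M :=
      Real.sq_sqrt (div_pos (hIpos M ⟨hM0, hM1⟩) hM0).le
    set s := Real.sqrt (I M / M) with hs
    simp only [hDdef]
    rw [le_div_iff₀ (by positivity : (0:ℝ) < 2 * s)]
    have hL : a / (2 * M) * s * (2 * s) = a * I M / M ^ 2 := by
      have : a / (2 * M) * s * (2 * s) = a / M * s ^ 2 := by ring
      rw [this, hs2, div_mul_div_comm, ← pow_two]
    rw [hL]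
    have hk := hkey M ⟨hM0, hM1⟩
    gcongr
    linarith
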